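/- Fix i > 0 and for each n let αₙ denote the subword of W of length |Wₙ| beginning at position i. If the sequence n ↦ d₀(Wₙ, αₙ) converges to a real number L, then the sequence n ↦ d(Wₙ, αₙ) converges to (4/3)·L. -/

import Mathlib

open Filter

/-- The Chacón words: `W₀ = 0`, `W_{n+1} = Wₙ Wₙ 1 Wₙ`. -/
def chaconWord : ℕ → List (Fin 2)
  | 0 => [0]
  | n + 1 => chaconWord n ++ chaconWord n ++ [1] ++ chaconWord n

/-- `W` is the infinite word having every `Wₙ` as an initial segment. -/
def IsChaconInfWord (W : ℕ → Fin 2) : Prop :=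
  ∀ n i, i < (chaconWord n).length → W i = (chaconWord n).getD i 0

/-- A finite word `α` occurs in a finite word `β` at position `j`. -/
def OccursAt (α β : List (Fin 2)) (j : ℕ) : Prop :=
  j + α.length ≤ β.length ∧ ∀ k < α.length, β.getD (j + k) 0 = α.getD k 0

/-- A finite word `α` occurs in the infinite word `W` at position `j`. -/
def OccursAtInf (W : ℕ → Fin 2) (α : List (Fin 2)) (j : ℕ) : Prop :=
  ∀ k < α.length, W (j + k) = α.getD k 0

/-- The subword of the infinite word `W` of length `L` beginning at position `i`. -/
def subword (W : ℕ → Fin 2) (i L : ℕ) : List (Fin 2) :=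
  (List.range L).map fun k => W (i + k)

/-- The (normalized) Hamming distance `d` of two finite words. -/
noncomputable def hamming (α β : List (Fin 2)) : ℝ :=
  (((Finset.range α.length).filter fun i => α.getD i 0 ≠ β.getD i 0).card : ℝ) / α.length

/-- The modified 0-Hamming distance `d₀` of two finite words. -/
noncomputable def hamming0 (α β : List (Fin 2)) : ℝ :=
  (((Finset.range α.length).filter fun i => α.getD i 0 = 0 ∧ β.getD i 0 = 1).card : ℝ) /
    (((Finset.range α.length).filter fun i => α.getD i 0 = 0).card : ℝ)

namespace CA

def subst (n : ℕ) (v : List (Fin 2)) : List (Fin 2) :=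
  v.flatMap fun c => if c = 0 then chaconWord n else [1]

@[simp] lemma subst_nil (n : ℕ) : subst n [] = [] := rfl

@[simp] lemma subst_cons (n : ℕ) (c : Fin 2) (v : List (Fin 2)) :
    subst n (c :: v) = (if c = 0 then chaconWord n else [1]) ++ subst n v := rfl

lemma subst_append (n : ℕ) (v w : List (Fin 2)) :
    subst n (v ++ w) = subst n v ++ subst n w := by
  simp [subst]

lemma fin2 (c : Fin 2) : c = 0 ∨ c = 1 := by omega

lemma chacon_add (n m : ℕ) : chaconWord (n + m) = subst n (chaconWord m) := by
  induction m with
  | zero => simp [chaconWord, subst]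
  | succ m ih =>
    have h : n + (m + 1) = (n + m) + 1 := by omega
    rw [h, chaconWord, ih, chaconWord, subst_append, subst_append]
    simp [subst]

lemma chacon_ne_nil (n : ℕ) : chaconWord n ≠ [] := by
  cases n <;> simp [chaconWord]

lemma len_pos (n : ℕ) : 1 ≤ (chaconWord n).length :=
  List.length_pos_iff.mpr (chacon_ne_nil n)

lemma len_succ (n : ℕ) : (chaconWord (n+1)).length = 3 * (chaconWord n).length + 1 := by
  simp [chaconWord]; omega

lemma two_len (n : ℕ) : 2 * (chaconWord n).length + 1 = 3 ^ (n + 1) := by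
  induction n with
  | zero => simp [chaconWord]
  | succ n ih => rw [len_succ]; rw [pow_succ]; omega

lemma getLast_chacon (n : ℕ) : (chaconWord n).getLast? = some 0 := by
  induction n with
  | zero => rfl
  | succ n ih => rw [chaconWord, List.getLast?_append, ih]; rfl

lemma head_chacon (n : ℕ) : (chaconWord n).head? = some 0 := by
  induction n with
  | zero => rfl
  | succ n ih => rw [chaconWord]; simp [List.head?_append, ih]

lemma good (n : ℕ) : (chaconWord n).Chain' (fun a b => ¬(a = 1 ∧ b = 1)) := by
  induction n with
  | zero => exact List.isChain_singleton _
  | succ n ih =>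
    rw [chaconWord]
    unfold List.Chain' at ih ⊢
    rw [List.isChain_append, List.isChain_append, List.isChain_append]
    refine ⟨⟨⟨ih, ih, ?_⟩, List.isChain_singleton _, ?_⟩, ih, ?_⟩
    · intro x hx y hy
      rw [head_chacon n] at hy
      cases hy; simp
    · intro x hx y hy
      simp at hy
      rw [List.getLast?_append, getLast_chacon n] at hx
      simp at hx
      omega
    · intro x hx y hy
      rw [head_chacon n] at hy
      cases hy; simp
end CA

namespace CA2
open CA

def p (n t : ℕ) : ℕ := ((chaconWord n).take t).count 1

def onesn (n : ℕ) : ℕ := (chaconWord n).count 1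

lemma p_full (n : ℕ) : p n (chaconWord n).length = onesn n := by
  simp [p, onesn]

lemma p_add_drop (n i : ℕ) :
    p n i + ((chaconWord n).drop i).count 1 = onesn n := by
  rw [p, onesn, ← List.count_append, List.take_append_drop]

lemma p_mono_succ (n t : ℕ) : p n t ≤ p n (t + 1) := by
  rw [p, p, List.take_add, List.count_append]
  omega

lemma p_step (n t : ℕ) : p n (t + 1) ≤ p n t + 1 := by
  rw [p, p, List.take_add, List.count_append]
  have := List.count_le_length (a := (1 : Fin 2)) (l := ((chaconWord n).drop t).take 1)
  have h2 := List.length_take (i := 1) (l := (chaconWord n).drop t)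
  omega

lemma take_subst (n : ℕ) (v : List (Fin 2)) (h0 : ∀ a v', v = a :: v' → a = 0)
    (t : ℕ) (ht : t ≤ (chaconWord n).length) (ht2 : t ≤ (subst n v).length) :
    ((subst n v).take t).count 1 = p n t := by
  cases v with
  | nil =>
    simp only [subst_nil, List.length_nil, Nat.le_zero] at ht2
    subst ht2; simp [p]
  | cons a v' =>
    have ha : a = 0 := h0 a v' rfl
    subst ha
    rw [subst_cons, if_pos rfl, List.take_append_of_le_length ht]
    rfl

lemma window_count (n : ℕ) : ∀ (v : List (Fin 2)),
    v.Chain' (fun a b => ¬(a = 1 ∧ b = 1)) →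
    ∀ i, i + (chaconWord n).length ≤ (subst n v).length →
    (((subst n v).drop i).take (chaconWord n).length).count 1 ≤ onesn n + 1 ∧
      onesn n ≤ (((subst n v).drop i).take (chaconWord n).length).count 1 + 1 := by
  intro v
  induction v with
  | nil =>
    intro _ i hlen
    exfalso
    have := len_pos n
    simp only [subst_nil, List.length_nil] at hlen
    omega
  | cons c v' ih =>
    intro hch i hlen
    have hch' : v'.Chain' (fun a b => ¬(a = 1 ∧ b = 1)) := hch.tail
    set ℓ := (chaconWord n).length with hℓ
    rcases fin2 c with rfl | rfl
    · -- c = 0 : block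
      rw [subst_cons, if_pos rfl] at hlen ⊢
      set R := subst n v' with hR
      rcases Nat.lt_or_ge i ℓ with hi | hi
      · rcases Nat.eq_zero_or_pos i with rfl | hpos
        · -- i = 0
          rw [List.drop_zero, List.take_append_of_le_length (le_refl ℓ), List.take_length]
          have : (chaconWord n).count 1 = onesn n := rfl
          omega
        · -- 0 < i < ℓ
          have hd : (chaconWord n ++ R).drop i = (chaconWord n).drop i ++ R := by
            rw [List.drop_append]
            have : i - ℓ = 0 := by omega
            rw [this, List.drop_zero]
          rw [hd, List.take_append]
          have hlen1 : ((chaconWord n).drop i).length = ℓ - i := by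
            simp [hℓ]
          have h1 : ((chaconWord n).drop i).take ℓ = (chaconWord n).drop i := by
            apply List.take_of_length_le; omega
          have h2 : ℓ - ((chaconWord n).drop i).length = i := by omega
          rw [h1, h2, List.count_append]
          have hpd := p_add_drop n i
          have hiR : i ≤ R.length := by
            rw [List.length_append] at hlen; omega
          cases v' with
          | nil =>
            exfalso
            have : R.length = 0 := by rw [hR]; rfl
            omega
          | cons a v'' =>
            rcases fin2 a with rfl | rfl
            · have := take_subst n (0 :: v'') (by intro x w hxw; cases hxw; rfl) i
                (le_of_lt hi) hiR
              rw [← hR] at this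
              rw [this]
              omega
            · -- spacer then block
              have hRc : R = 1 :: subst n v'' := by rw [hR]; rfl
              obtain ⟨j, rfl⟩ : ∃ j, i = j + 1 := ⟨i - 1, by omega⟩
              rw [hRc, List.take_succ_cons, List.count_cons_self]
              have hhead : ∀ x w, v'' = x :: w → x = 0 := by
                intro x w hxw
                subst hxw
                have := (List.isChain_cons_cons.mp (List.isChain_cons_cons.mp hch).2).1
                rcases fin2 x with rfl | rfl
                · rfl
                · exact absurd ⟨rfl, rfl⟩ this
              have hjS : j ≤ (subst n v'').length := by
                have : R.length = (subst n v'').length + 1 := by rw [hRc]; rfl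
                omega
              rw [take_subst n v'' hhead j (by omega) hjS]
              have hs1 := p_step n j
              have hs2 := p_mono_succ n j
              omega
      · -- i ≥ ℓ : recurse
        have hd : (chaconWord n ++ R).drop i = R.drop (i - ℓ) := by
          rw [List.drop_append, List.drop_eq_nil_of_le (by omega),
            List.nil_append]
        rw [hd]
        apply ih hch'
        rw [List.length_append] at hlen
        omega
    · -- c = 1 : spacer
      rw [subst_cons, if_neg (by decide)] at hlen ⊢
      set R := subst n v' with hR
      have hcons : ([1] : List (Fin 2)) ++ R = 1 :: R := rfl
      rw [hcons] at hlen ⊢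
      rcases Nat.eq_zero_or_pos i with rfl | hpos
      · rw [List.drop_zero]
        have hp : 1 ≤ ℓ := len_pos n
        obtain ⟨m, hm⟩ : ∃ m, ℓ = m + 1 := ⟨ℓ - 1, by omega⟩
        rw [hm, List.take_succ_cons, List.count_cons_self]
        have hhead : ∀ x w, v' = x :: w → x = 0 := by
          intro x w hxw
          subst hxw
          have := (List.isChain_cons_cons.mp hch).1
          rcases fin2 x with rfl | rfl
          · rfl
          · exact absurd ⟨rfl, rfl⟩ this
        have hlenR : ℓ ≤ R.length + 1 := by simpa using hlen
        have hmR : m ≤ R.length := by omega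
        rw [take_subst n v' hhead m (by omega) hmR]
        have hs1 := p_step n m
        have hs2 := p_mono_succ n m
        have hf := p_full n
        rw [← hℓ, hm] at hf
        omega
      · obtain ⟨j, rfl⟩ : ∃ j, i = j + 1 := ⟨i - 1, by omega⟩
        rw [List.drop_succ_cons]
        apply ih hch'
        have hlenR : j + 1 + ℓ ≤ R.length + 1 := by simpa using hlen
        omega

end CA2

namespace CA3
open CA CA2

lemma card_filter_eq_count (l : List (Fin 2)) (c : Fin 2) :
    ((Finset.range l.length).filter fun i => l.getD i 0 = c).card = l.count c := by
  induction l with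
  | nil => simp
  | cons a t ih =>
    rw [Finset.card_filter] at ih ⊢
    rw [List.length_cons, Finset.sum_range_succ']
    simp only [List.getD_cons_succ, List.getD_cons_zero]
    rw [ih, List.count_cons]
    by_cases h : a = c <;> simp [h]

lemma card_ne_eq (s : Finset ℕ) (f g : ℕ → Fin 2) :
    (s.filter fun i => f i ≠ g i).card
      = (s.filter fun i => f i = 0 ∧ g i = 1).card
        + (s.filter fun i => f i = 1 ∧ g i = 0).card := by
  rw [Finset.card_filter, Finset.card_filter, Finset.card_filter, ← Finset.sum_add_distrib]
  apply Finset.sum_congr rfl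
  intro i _
  rcases fin2 (f i) with h1 | h1 <;> rcases fin2 (g i) with h2 | h2 <;>
    simp [h1, h2]

lemma card_balance (s : Finset ℕ) (f g : ℕ → Fin 2) :
    (s.filter fun i => f i = 0 ∧ g i = 1).card + (s.filter fun i => f i = 1).card
      = (s.filter fun i => f i = 1 ∧ g i = 0).card + (s.filter fun i => g i = 1).card := by
  rw [Finset.card_filter, Finset.card_filter, Finset.card_filter, Finset.card_filter,
    ← Finset.sum_add_distrib, ← Finset.sum_add_distrib]
  apply Finset.sum_congr rfl
  intro i _
  rcases fin2 (f i) with h1 | h1 <;> rcases fin2 (g i) with h2 | h2 <;>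
    simp [h1, h2]

lemma card_zero_add_count (l : List (Fin 2)) :
    ((Finset.range l.length).filter fun i => l.getD i 0 = 0).card + l.count 1 = l.length := by
  rw [← card_filter_eq_count l 1, Finset.card_filter, Finset.card_filter,
    ← Finset.sum_add_distrib]
  have : ∀ i ∈ Finset.range l.length,
      ((if l.getD i 0 = 0 then 1 else 0) + if l.getD i 0 = 1 then 1 else 0) = 1 := by
    intro i _
    rcases fin2 (l.getD i 0) with h | h <;> rw [h] <;> decide
  rw [Finset.sum_congr rfl this]
  simp

lemma count_ones_chacon (n : ℕ) : (chaconWord n).count 1 + 3 ^ n = (chaconWord n).length := by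
  induction n with
  | zero => simp [chaconWord]
  | succ n ih =>
    rw [chaconWord]
    simp only [List.count_append, List.length_append]
    rw [pow_succ]
    simp [List.count_singleton]
    omega

lemma len_add_le (n m : ℕ) : (chaconWord n).length + m ≤ (chaconWord (n + m)).length := by
  induction m with
  | zero => simp
  | succ m ih =>
    have h : n + (m + 1) = (n + m) + 1 := by omega
    rw [h, len_succ]
    omega

end CA3

namespace CA4
open CA CA2 CA3

@[simp] lemma subword_length (W : ℕ → Fin 2) (i L : ℕ) : (subword W i L).length = L := by
  simp [subword]

lemma subword_eq_window (W : ℕ → Fin 2) (hW : IsChaconInfWord W) (i n m : ℕ)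
    (h : i + (chaconWord n).length ≤ (chaconWord (n + m)).length) :
    subword W i (chaconWord n).length
      = ((chaconWord (n + m)).drop i).take (chaconWord n).length := by
  apply List.ext_getElem
  · rw [subword_length, List.length_take, List.length_drop]
    omega
  · intro k h1 h2
    rw [subword_length] at h1
    have hk : i + k < (chaconWord (n + m)).length := by omega
    have hL : W (i + k) = (chaconWord (n + m)).getD (i + k) 0 := hW (n + m) (i + k) hk
    simp only [subword, List.getElem_map, List.getElem_range]
    rw [List.getElem_take, List.getElem_drop, hL, List.getD_eq_getElem _ _ hk]

lemma window_bounds (W : ℕ → Fin 2) (hW : IsChaconInfWord W) (i n : ℕ) :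
    (subword W i (chaconWord n).length).count 1 ≤ onesn n + 1 ∧
      onesn n ≤ (subword W i (chaconWord n).length).count 1 + 1 := by
  have hlen := len_add_le n i
  have hsub := subword_eq_window W hW i n i (by omega)
  rw [hsub, chacon_add n i]
  exact window_count n (chaconWord i) (good i) i (by rw [← chacon_add]; omega)

end CA4

namespace CA5
open CA CA2 CA3 CA4

def Acnt (W : ℕ → Fin 2) (i n : ℕ) : ℕ :=
  ((Finset.range (chaconWord n).length).filter fun j =>
    (chaconWord n).getD j 0 = 0 ∧ (subword W i (chaconWord n).length).getD j 0 = 1).card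

def Bcnt (W : ℕ → Fin 2) (i n : ℕ) : ℕ :=
  ((Finset.range (chaconWord n).length).filter fun j =>
    (chaconWord n).getD j 0 = 1 ∧ (subword W i (chaconWord n).length).getD j 0 = 0).card

lemma denom_eq (n : ℕ) :
    ((Finset.range (chaconWord n).length).filter fun j => (chaconWord n).getD j 0 = 0).card
      = 3 ^ n := by
  have h1 := card_zero_add_count (chaconWord n)
  have h2 := count_ones_chacon n
  omega

lemma hamming0_eq (W : ℕ → Fin 2) (i n : ℕ) :
    hamming0 (chaconWord n) (subword W i (chaconWord n).length)
      = (Acnt W i n : ℝ) / 3 ^ n := by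
  rw [hamming0, Acnt, denom_eq n]
  push_cast
  rfl

lemma hamming_eq (W : ℕ → Fin 2) (i n : ℕ) :
    hamming (chaconWord n) (subword W i (chaconWord n).length)
      = ((Acnt W i n : ℝ) + (Bcnt W i n : ℝ)) / ((chaconWord n).length : ℝ) := by
  rw [hamming]
  have := card_ne_eq (Finset.range (chaconWord n).length)
    (fun j => (chaconWord n).getD j 0) (fun j => (subword W i (chaconWord n).length).getD j 0)
  rw [this]
  push_cast
  rfl

lemma AB_close (W : ℕ → Fin 2) (hW : IsChaconInfWord W) (i n : ℕ) :
    Acnt W i n ≤ Bcnt W i n + 1 ∧ Bcnt W i n ≤ Acnt W i n + 1 := by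
  have hbal := card_balance (Finset.range (chaconWord n).length)
    (fun j => (chaconWord n).getD j 0) (fun j => (subword W i (chaconWord n).length).getD j 0)
  have hc1 : ((Finset.range (chaconWord n).length).filter fun j =>
      (chaconWord n).getD j 0 = 1).card = (chaconWord n).count 1 :=
    card_filter_eq_count (chaconWord n) 1
  have hc2 : ((Finset.range (chaconWord n).length).filter fun j =>
      (subword W i (chaconWord n).length).getD j 0 = 1).card
        = (subword W i (chaconWord n).length).count 1 := by
    have := card_filter_eq_count (subword W i (chaconWord n).length) 1
    rwa [subword_length] at this
  rw [hc1, hc2] at hbal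
  have hwin := window_bounds W hW i n
  have honesn : onesn n = (chaconWord n).count 1 := rfl
  rw [Acnt, Bcnt]
  omega

end CA5

open CA CA2 CA3 CA4 CA5 in
theorem chacon_hamming_limit (W : ℕ → Fin 2) (hW : IsChaconInfWord W) (i : ℕ) (hi : 0 < i)
    (L : ℝ)
    (hconv : Tendsto (fun n => hamming0 (chaconWord n) (subword W i (chaconWord n).length))
      atTop (nhds L)) :
    Tendsto (fun n => hamming (chaconWord n) (subword W i (chaconWord n).length))
      atTop (nhds (4 / 3 * L)) := by
  have h1 : Tendsto (fun n => (Acnt W i n : ℝ) / 3 ^ n) atTop (nhds L) :=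
    hconv.congr fun n => hamming0_eq W i n
  have hdiff : Tendsto (fun n => (Bcnt W i n : ℝ) / 3 ^ n - (Acnt W i n : ℝ) / 3 ^ n)
      atTop (nhds 0) := by
    apply squeeze_zero_norm (a := fun n => (1 / 3 : ℝ) ^ n)
    · intro n
      have h5 := AB_close W hW i n
      have c1 : (Acnt W i n : ℝ) ≤ (Bcnt W i n : ℝ) + 1 := by exact_mod_cast h5.1
      have c2 : (Bcnt W i n : ℝ) ≤ (Acnt W i n : ℝ) + 1 := by exact_mod_cast h5.2
      have habs : |(Bcnt W i n : ℝ) - (Acnt W i n : ℝ)| ≤ 1 := by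
        rw [abs_le]; constructor <;> linarith
      have hpow : (0 : ℝ) < 3 ^ n := by positivity
      rw [div_sub_div_same, Real.norm_eq_abs, abs_div, abs_of_pos hpow, div_pow, one_pow]
      gcongr
    · exact tendsto_pow_atTop_nhds_zero_of_lt_one (by norm_num) (by norm_num)
  have h2 : Tendsto (fun n => (Bcnt W i n : ℝ) / 3 ^ n) atTop (nhds L) := by
    have h := h1.add hdiff
    rw [add_zero] at h
    exact h.congr fun n => by ring
  have hl3 : ∀ n : ℕ, ((chaconWord n).length : ℝ) = (3 * 3 ^ n - 1) / 2 := by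
    intro n
    have h := two_len n
    have h' : ((2 * (chaconWord n).length + 1 : ℕ) : ℝ) = ((3 ^ (n + 1) : ℕ) : ℝ) := by
      exact_mod_cast congrArg (Nat.cast : ℕ → ℝ) h
    push_cast at h'
    rw [pow_succ] at h'
    linarith
  have h3 : Tendsto (fun n => (3 : ℝ) ^ n / ((chaconWord n).length : ℝ)) atTop
      (nhds (2 / 3)) := by
    have heq : ∀ n : ℕ, (3 : ℝ) ^ n / ((chaconWord n).length : ℝ)
        = 2 / (3 - (1 / 3) ^ n) := by
      intro n
      rw [hl3 n, div_pow, one_pow]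
      have hp : (1 : ℝ) ≤ 3 ^ n := one_le_pow₀ (by norm_num)
      have h0 : (3 : ℝ) ^ n ≠ 0 := by positivity
      have h4 : (3 : ℝ) * 3 ^ n - 1 ≠ 0 := by nlinarith
      field_simp
    have hden : Tendsto (fun n : ℕ => (3 : ℝ) - (1 / 3) ^ n) atTop (nhds 3) := by
      have := (tendsto_const_nhds (x := (3 : ℝ)) (f := atTop)).sub
        (tendsto_pow_atTop_nhds_zero_of_lt_one (by norm_num : (0:ℝ) ≤ 1/3) (by norm_num))
      simpa using this
    have := (tendsto_const_nhds (x := (2 : ℝ)) (f := atTop)).div hden (by norm_num)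
    exact (Tendsto.congr (fun n => (heq n).symm) this)
  have hfin := (h1.add h2).mul h3
  have hval : (L + L) * (2 / 3) = 4 / 3 * L := by ring
  rw [hval] at hfin
  apply hfin.congr
  intro n
  rw [hamming_eq W i n]
  have hlp : (0 : ℝ) < ((chaconWord n).length : ℝ) := by exact_mod_cast len_pos n
  have h0 : (3 : ℝ) ^ n ≠ 0 := by positivity
  field_simp
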